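/- Let x₀,…,xₘ ∈ ℂⁿ, X = [x₀ … x_{m−1}], Y = [x₁ … xₘ], A = Y X⁺. Assume: (a) ker(X) ⊆ ker(Y); (b) A is diagonalizable with distinct nonzero eigenvalues; (c) rank(Y) = r₁. Then there exist distinct nonzero λ₁,…,λ_{r₁} ∈ ℂ (the nonzero eigenvalues of A), nonzero coefficients b₁,…,b_{r₂} and linearly independent eigenvectors v₁,…,v_{r₂} of A with r₁ ≤ r₂ ≤ n and r₁ ≤ m such that x₀ = Σ_{j=1}^{r₂} b_j v_j and x_k = Σ_{j=1}^{r₁} λ_j^k b_j v_j for k = 1,…,m. -/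

import Mathlib

open Matrix

def IsMoorePenrose {n m : ℕ} (X : Matrix (Fin n) (Fin m) ℂ)
    (P : Matrix (Fin m) (Fin n) ℂ) : Prop :=
  X * P * X = X ∧ P * X * P = P ∧ (X * P)ᴴ = X * P ∧ (P * X)ᴴ = P * X

theorem stmt5 {n m r₁ : ℕ} (x : Fin (m + 1) → Fin n → ℂ)
    (X Y : Matrix (Fin n) (Fin m) ℂ)
    (hX : X = Matrix.of fun i j => x j.castSucc i)
    (hY : Y = Matrix.of fun i j => x j.succ i)
    (P : Matrix (Fin m) (Fin n) ℂ) (hP : IsMoorePenrose X P)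
    (A : Matrix (Fin n) (Fin n) ℂ) (hA : A = Y * P)
    -- (a) ker X ⊆ ker Y
    (hker : ∀ z : Fin m → ℂ, X.mulVec z = 0 → Y.mulVec z = 0)
    -- (b) A diagonalizable, with the nonzero eigenvalues distinct
    (hdiag : ∃ (S : Matrix (Fin n) (Fin n) ℂ) (d : Fin n → ℂ),
      IsUnit S.det ∧ A = S * Matrix.diagonal d * S⁻¹ ∧
        ∀ i j, d i = d j → d i ≠ 0 → i = j)
    -- (c) rank Y = r₁
    (hrank : Y.rank = r₁) :
    ∃ (r₂ : ℕ) (h12 : r₁ ≤ r₂), r₂ ≤ n ∧ r₁ ≤ m ∧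
      ∃ (lam : Fin r₁ → ℂ) (b : Fin r₂ → ℂ) (v : Fin r₂ → Fin n → ℂ),
        Function.Injective lam ∧ (∀ j, lam j ≠ 0) ∧ (∀ j, b j ≠ 0) ∧
        LinearIndependent ℂ v ∧
        (∀ j : Fin r₁,
          A.mulVec (v (Fin.castLE h12 j)) = lam j • v (Fin.castLE h12 j)) ∧
        (∀ j : Fin r₂, r₁ ≤ (j : ℕ) → A.mulVec (v j) = 0) ∧
        x 0 = ∑ j, b j • v j ∧
        (∀ k : Fin (m + 1), k ≠ 0 →
          x k = ∑ j : Fin r₁,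
            (lam j ^ (k : ℕ) * b (Fin.castLE h12 j)) • v (Fin.castLE h12 j)) := by
  classical
  obtain ⟨S, d, hSdet, hASd, hdist⟩ := hdiag
  have hS1 : S * S⁻¹ = 1 := mul_nonsing_inv S hSdet
  have hS1' : S⁻¹ * S = 1 := nonsing_inv_mul S hSdet
  set c : Fin n → ℂ := S⁻¹.mulVec (x 0) with hc
  set col : Fin n → Fin n → ℂ := fun i r => S r i with hcol
  have hAS : A * S = S * Matrix.diagonal d := by
    rw [hASd, Matrix.mul_assoc (S * Matrix.diagonal d), hS1', Matrix.mul_one]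
  -- eigenvector property of columns of S
  have heig : ∀ i, A.mulVec (col i) = d i • col i := by
    intro i
    have h1 : col i = S.mulVec (Pi.single i 1) := by
      funext r; simp [hcol]
    rw [h1, Matrix.mulVec_mulVec, hAS]
    funext r
    simp [Matrix.mulVec_single, Matrix.mul_diagonal, hcol, mul_comm]
  -- the recurrence A x_k = x_{k+1}
  have hYPX : ∀ u : Fin m → ℂ, Y.mulVec (P.mulVec (X.mulVec u)) = Y.mulVec u := by
    intro u
    have h0 : X.mulVec (P.mulVec (X.mulVec u) - u) = 0 := by
      rw [Matrix.mulVec_sub, Matrix.mulVec_mulVec, Matrix.mulVec_mulVec, hP.1, sub_self]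
    have h1 := hker _ h0
    rw [Matrix.mulVec_sub, sub_eq_zero] at h1
    exact h1
  have hrec : ∀ j : Fin m, A.mulVec (x j.castSucc) = x j.succ := by
    intro j
    have hXcol : x j.castSucc = X.mulVec (Pi.single j 1) := by
      funext i; simp [hX]
    have hYcol : x j.succ = Y.mulVec (Pi.single j 1) := by
      funext i; simp [hY]
    rw [hXcol, hYcol, hA, ← Matrix.mulVec_mulVec]
    exact hYPX _
  -- expansion of x 0
  have hx0 : x 0 = ∑ i, c i • col i := by
    have h1 : S.mulVec c = x 0 := by
      rw [hc, Matrix.mulVec_mulVec, hS1, Matrix.one_mulVec]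
    rw [← h1]
    funext r
    simp [Matrix.mulVec, dotProduct, Finset.sum_apply, hcol, mul_comm]
  -- expansion of all x k
  have hxk : ∀ k : Fin (m + 1), x k = ∑ i, (d i ^ (k : ℕ) * c i) • col i := by
    intro k
    induction k using Fin.induction with
    | zero => simpa using hx0
    | succ j ih =>
      have hlin : A.mulVec (∑ i, (d i ^ ((j.castSucc : Fin (m+1)) : ℕ) * c i) • col i)
          = ∑ i, (d i ^ ((j.castSucc : Fin (m+1)) : ℕ) * c i) • A.mulVec (col i) := by
        have h2 : ∀ w : Fin n → ℂ, A.mulVec w = A.mulVecLin w := fun _ => rfl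
        rw [h2, map_sum]
        refine Finset.sum_congr rfl fun i _ => ?_
        rw [_root_.map_smul, h2]
      rw [← hrec j, ih, hlin]
      refine Finset.sum_congr rfl fun i _ => ?_
      rw [heig, smul_smul]
      congr 1
      rw [Fin.val_succ, Fin.coe_castSucc, pow_succ]
      ring
  -- the index sets
  set T₁ : Finset (Fin n) := Finset.univ.filter (fun i => c i ≠ 0 ∧ d i ≠ 0) with hT₁
  set T₀ : Finset (Fin n) := Finset.univ.filter (fun i => c i ≠ 0 ∧ d i = 0) with hT₀
  have hdisj : Disjoint T₁ T₀ := by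
    rw [Finset.disjoint_left]
    intro a ha ha'
    rw [hT₁, Finset.mem_filter] at ha
    rw [hT₀, Finset.mem_filter] at ha'
    exact ha.2.2 ha'.2.2
  have hcardn : T₁.card + T₀.card ≤ n := by
    calc T₁.card + T₀.card = (T₁ ∪ T₀).card := (Finset.card_union_of_disjoint hdisj).symm
      _ ≤ Fintype.card (Fin n) := Finset.card_le_univ _
      _ = n := Fintype.card_fin n
  -- enumerations
  set e₁ : Fin T₁.card → Fin n := fun j => ((T₁.orderIsoOfFin rfl) j : Fin n) with he₁
  set e₀ : Fin T₀.card → Fin n := fun j => ((T₀.orderIsoOfFin rfl) j : Fin n) with he₀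
  have he₁mem : ∀ j, e₁ j ∈ T₁ := fun j => ((T₁.orderIsoOfFin rfl) j).2
  have he₀mem : ∀ j, e₀ j ∈ T₀ := fun j => ((T₀.orderIsoOfFin rfl) j).2
  have he₁prop : ∀ j, c (e₁ j) ≠ 0 ∧ d (e₁ j) ≠ 0 := by
    intro j; have := he₁mem j; rw [hT₁, Finset.mem_filter] at this; exact this.2
  have he₀prop : ∀ j, c (e₀ j) ≠ 0 ∧ d (e₀ j) = 0 := by
    intro j; have := he₀mem j; rw [hT₀, Finset.mem_filter] at this; exact this.2
  have he₁inj : Function.Injective e₁ := fun a b h =>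
    (T₁.orderIsoOfFin rfl).injective (Subtype.ext h)
  have he₀inj : Function.Injective e₀ := fun a b h =>
    (T₀.orderIsoOfFin rfl).injective (Subtype.ext h)
  have he₁surj : ∀ i ∈ T₁, ∃ j, e₁ j = i := by
    intro i hi
    refine ⟨(T₁.orderIsoOfFin rfl).symm ⟨i, hi⟩, ?_⟩
    rw [he₁]
    exact congrArg Subtype.val ((T₁.orderIsoOfFin rfl).apply_symm_apply ⟨i, hi⟩)
  have he₀surj : ∀ i ∈ T₀, ∃ j, e₀ j = i := by
    intro i hi
    refine ⟨(T₀.orderIsoOfFin rfl).symm ⟨i, hi⟩, ?_⟩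
    rw [he₀]
    exact congrArg Subtype.val ((T₀.orderIsoOfFin rfl).apply_symm_apply ⟨i, hi⟩)
  -- reindexing sums
  have hsum1 : ∀ f : Fin n → (Fin n → ℂ), ∑ j, f (e₁ j) = ∑ i ∈ T₁, f i := by
    intro f
    rw [← Finset.sum_coe_sort T₁ f]
    exact Fintype.sum_equiv (T₁.orderIsoOfFin rfl).toEquiv _ _ (fun j => rfl)
  have hsum0 : ∀ f : Fin n → (Fin n → ℂ), ∑ j, f (e₀ j) = ∑ i ∈ T₀, f i := by
    intro f
    rw [← Finset.sum_coe_sort T₀ f]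
    exact Fintype.sum_equiv (T₀.orderIsoOfFin rfl).toEquiv _ _ (fun j => rfl)
  -- expansion of x k over T₁ for k ≠ 0
  have hxk1 : ∀ k : Fin (m + 1), (k : ℕ) ≠ 0 →
      x k = ∑ i ∈ T₁, (d i ^ (k : ℕ) * c i) • col i := by
    intro k hk
    rw [hxk k]
    refine (Finset.sum_filter_of_ne ?_).symm
    intro i _ hne
    constructor
    · intro h0; exact hne (by simp [h0])
    · intro h0; exact hne (by simp [h0, zero_pow hk])
  -- expansion of x 0 over T₁ ∪ T₀
  have hx0split : x 0 = (∑ i ∈ T₁, c i • col i) + ∑ i ∈ T₀, c i • col i := by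
    rw [hx0, ← Finset.sum_union hdisj]
    refine (Finset.sum_subset (Finset.subset_univ _) ?_).symm
    intro i _ hi
    have hci : c i = 0 := by
      by_contra hci
      rcases eq_or_ne (d i) 0 with h | h
      · exact hi (Finset.mem_union_right _ (by rw [hT₀, Finset.mem_filter]; exact ⟨Finset.mem_univ _, hci, h⟩))
      · exact hi (Finset.mem_union_left _ (by rw [hT₁, Finset.mem_filter]; exact ⟨Finset.mem_univ _, hci, h⟩))
    simp [hci]
  -- rank computation
  have hrankA : A.rank = Fintype.card {i // d i ≠ 0} := by
    rw [hASd, Matrix.rank_mul_eq_left_of_isUnit_det _ _ (isUnit_nonsing_inv_det S hSdet),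
      Matrix.rank_mul_eq_right_of_isUnit_det _ _ hSdet, Matrix.rank_diagonal]
  have hcard1 : T₁.card ≤ A.rank := by
    rw [hrankA, Fintype.card_subtype]
    apply Finset.card_le_card
    intro i hi
    rw [hT₁, Finset.mem_filter] at hi
    simpa using hi.2.2
  have hAY : A.rank ≤ Y.rank := by rw [hA]; exact Matrix.rank_mul_le_left _ _
  have hupper : Y.rank ≤ T₁.card := by
    have hsub : LinearMap.range Y.mulVecLin ≤
        Submodule.span ℂ (Set.range fun j : Fin T₁.card => col (e₁ j)) := by
      rintro y ⟨z, rfl⟩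
      have hy : Y.mulVecLin z = ∑ k : Fin m, z k • x k.succ := by
        funext i
        simp [Matrix.mulVecLin_apply, Matrix.mulVec, dotProduct, hY,
          Finset.sum_apply, mul_comm]
      rw [hy]
      refine Submodule.sum_mem _ fun k _ => Submodule.smul_mem _ _ ?_
      have hks : ((k.succ : Fin (m + 1)) : ℕ) ≠ 0 := by simp
      rw [hxk1 _ hks]
      refine Submodule.sum_mem _ fun i hi => Submodule.smul_mem _ _ ?_
      obtain ⟨j, rfl⟩ := he₁surj i hi
      exact Submodule.subset_span ⟨j, rfl⟩
    calc Y.rank = Module.finrank ℂ (LinearMap.range Y.mulVecLin) := rfl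
      _ ≤ Module.finrank ℂ (Submodule.span ℂ (Set.range fun j : Fin T₁.card => col (e₁ j))) :=
          Submodule.finrank_mono hsub
      _ ≤ T₁.card := by simpa [Set.finrank] using finrank_range_le_card (fun j : Fin T₁.card => col (e₁ j))
  have hr1 : r₁ = T₁.card :=
    le_antisymm (hrank ▸ hupper) (hcard1.trans (hAY.trans hrank.le))
  have hr1m : T₁.card ≤ m := hr1 ▸ (hrank ▸ Matrix.rank_le_width Y : r₁ ≤ m)
  subst hr1
  -- the witnesses
  set e : Fin (T₁.card + T₀.card) → Fin n := Fin.append e₁ e₀ with he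
  have heinj : Function.Injective e := by
    intro a b
    induction a using Fin.addCases with
    | left a0 =>
      induction b using Fin.addCases with
      | left b0 =>
        intro h
        rw [he, Fin.append_left, Fin.append_left] at h
        exact congrArg _ (he₁inj h)
      | right b0 =>
        intro h
        rw [he, Fin.append_left, Fin.append_right] at h
        exact absurd (he₀prop b0).2 (h ▸ (he₁prop a0).2)
    | right a0 =>
      induction b using Fin.addCases with
      | left b0 =>
        intro h
        rw [he, Fin.append_right, Fin.append_left] at h
        exact absurd (he₀prop a0).2 (h.symm ▸ (he₁prop b0).2)
      | right b0 =>
        intro h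
        rw [he, Fin.append_right, Fin.append_right] at h
        exact congrArg _ (he₀inj h)
  have hcolLI : LinearIndependent ℂ col := by
    have h := Matrix.linearIndependent_cols_iff_isUnit.mpr
      ((Matrix.isUnit_iff_isUnit_det S).mpr hSdet)
    exact h
  have hcast : ∀ j : Fin T₁.card,
      (Fin.castLE (Nat.le_add_right T₁.card T₀.card) j) = Fin.castAdd T₀.card j :=
    fun j => rfl
  refine ⟨T₁.card + T₀.card, Nat.le_add_right _ _, hcardn, hr1m,
    fun j => d (e₁ j), fun j => c (e j), fun j => col (e j), ?_, ?_, ?_, ?_, ?_, ?_, ?_, ?_⟩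
  · -- lam injective
    intro a b h
    exact he₁inj (hdist _ _ h (he₁prop a).2)
  · -- lam nonzero
    exact fun j => (he₁prop j).2
  · -- b nonzero
    intro j
    induction j using Fin.addCases with
    | left j0 => simp only [he, Fin.append_left]; exact (he₁prop j0).1
    | right j0 => simp only [he, Fin.append_right]; exact (he₀prop j0).1
  · -- linear independence
    exact hcolLI.comp e heinj
  · -- eigenvectors with nonzero eigenvalue
    intro j
    rw [hcast j]
    simp only [he, Fin.append_left]
    exact heig _
  · -- eigenvectors with zero eigenvalue
    intro j hj
    induction j using Fin.addCases with
    | left j0 =>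
      have h' : ((Fin.castAdd T₀.card j0 : Fin (T₁.card + T₀.card)) : ℕ) = (j0 : ℕ) := rfl
      exact absurd hj (by rw [h']; exact Nat.not_le.mpr j0.isLt)
    | right j0 =>
      simp only [he, Fin.append_right]
      rw [heig, (he₀prop j0).2, zero_smul]
  · -- x 0
    rw [Fin.sum_univ_add]
    have h1 : ∀ j : Fin T₁.card, c (e (Fin.castAdd T₀.card j)) • col (e (Fin.castAdd T₀.card j))
        = c (e₁ j) • col (e₁ j) := by intro j; simp only [he, Fin.append_left]
    have h0 : ∀ j : Fin T₀.card, c (e (Fin.natAdd T₁.card j)) • col (e (Fin.natAdd T₁.card j))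
        = c (e₀ j) • col (e₀ j) := by intro j; simp only [he, Fin.append_right]
    simp only [h1, h0]
    rw [hsum1 (fun i => c i • col i), hsum0 (fun i => c i • col i)]
    exact hx0split
  · -- x k for k ≠ 0
    intro k hk
    have hkn : (k : ℕ) ≠ 0 := by
      exact Fin.val_ne_zero_iff.mpr hk
    rw [hxk1 k hkn, ← hsum1 (fun i => (d i ^ (k : ℕ) * c i) • col i)]
    refine Finset.sum_congr rfl fun j _ => ?_
    rw [hcast j]
    simp only [he, Fin.append_left]
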